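/- Let d ≥ 1, δ ≥ 0 and 1 < p⁻ ≤ p⁺ < ∞. There exists a constant c ≥ 1, depending only on d, p⁻, p⁺ and δ, such that for every exponent p ∈ [p⁻, p⁺] and all matrices A, B ∈ ℝ^{d×d}: c⁻¹ (φ_p)_{|A^sym|}(|A^sym − B^sym|) ≤ |F_p(A) − F_p(B)|² ≤ c (φ_p)_{|A^sym|}(|A^sym − B^sym|). -/

import Mathlib

open MeasureTheory
set_option maxHeartbeats 2000000

lemma two_rpow_ge_one {E : ℝ} (hE : 0 ≤ E) : (1:ℝ) ≤ 2 ^ E := by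
  rw [show (1:ℝ) = (2:ℝ) ^ (0:ℝ) from (Real.rpow_zero 2).symm]
  exact Real.rpow_le_rpow_of_exponent_le one_le_two hE

/-- If `x ≤ 2y` and `y ≤ 2x` (both nonneg) then `y^z ≤ 2^E x^z` whenever `|z| ≤ E`. -/
lemma rpow_comp {x y z E : ℝ} (hx : 0 ≤ x) (hy : 0 ≤ y) (hxy : x ≤ 2*y) (hyx : y ≤ 2*x)
    (hzE : |z| ≤ E) : y ^ z ≤ 2 ^ E * x ^ z := by
  have hE : 0 ≤ E := (abs_nonneg z).trans hzE
  have h2E : (1:ℝ) ≤ 2 ^ E := two_rpow_ge_one hE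
  rcases eq_or_lt_of_le hx with h0 | hxpos
  · have hy0 : y = 0 := le_antisymm (by linarith) hy
    rw [← h0, hy0]
    nlinarith [Real.rpow_nonneg (le_refl (0:ℝ)) z]
  · have hypos : 0 < y := by nlinarith
    rcases le_or_gt 0 z with hz | hz
    · calc y ^ z ≤ (2*x) ^ z := Real.rpow_le_rpow hy hyx hz
        _ = 2 ^ z * x ^ z := Real.mul_rpow (by norm_num) hxpos.le
        _ ≤ 2 ^ E * x ^ z := by
            have := Real.rpow_le_rpow_of_exponent_le one_le_two ((le_abs_self z).trans hzE)
            exact mul_le_mul_of_nonneg_right this (Real.rpow_nonneg hxpos.le z)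
    · have hx2 : x / 2 ≤ y := by linarith
      have hx2pos : 0 < x / 2 := by linarith
      calc y ^ z ≤ (x/2) ^ z :=
            Real.rpow_le_rpow_of_nonpos hx2pos hx2 hz.le
        _ = x ^ z * ((2:ℝ) ^ z)⁻¹ := by
            rw [div_eq_mul_inv, Real.mul_rpow hxpos.le (by norm_num),
              Real.inv_rpow (by norm_num)]
        _ = x ^ z * (2:ℝ) ^ (-z) := by rw [Real.rpow_neg (by norm_num)]
        _ ≤ x ^ z * 2 ^ E := by
            have := Real.rpow_le_rpow_of_exponent_le one_le_two ((neg_le_abs z).trans hzE)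
            exact mul_le_mul_of_nonneg_left this (Real.rpow_nonneg hxpos.le z)
        _ = 2 ^ E * x ^ z := mul_comm _ _

/-- Mean value identity for `rpow` on a positive interval. -/
lemma rpow_mvt {u v : ℝ} (hu : 0 < u) (huv : u < v) (α : ℝ) :
    ∃ ξ, u < ξ ∧ ξ < v ∧ v ^ α - u ^ α = α * ξ ^ (α - 1) * (v - u) := by
  have hcont : ContinuousOn (fun x : ℝ => x ^ α) (Set.Icc u v) := by
    intro x hx
    exact (Real.continuousAt_rpow_const x α (Or.inl (by linarith [hx.1] : x ≠ 0))).continuousWithinAt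
  have hderiv : ∀ x ∈ Set.Ioo u v, HasDerivAt (fun x : ℝ => x ^ α) (α * x ^ (α - 1)) x := by
    intro x hx
    have h := Real.hasDerivAt_rpow_const (x := x) (p := α) (Or.inl (ne_of_gt (hu.trans hx.1)))
    simpa [mul_comm] using h
  obtain ⟨ξ, hmem, heq⟩ :=
    exists_hasDerivAt_eq_slope (fun x : ℝ => x ^ α) (fun x => α * x ^ (α-1)) huv hcont hderiv
  refine ⟨ξ, hmem.1, hmem.2, ?_⟩
  have hne : v - u ≠ 0 := by linarith
  field_simp at heq
  linarith [heq]

/-- Monotonicity of `x ↦ (b+x)^q x` for `q > -1`. -/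
lemma g_mono {q b t s : ℝ} (hb : 0 ≤ b) (ht : 0 ≤ t) (hts : t ≤ s) (hq : -1 < q) :
    (b+t)^q * t ≤ (b+s)^q * s := by
  rcases le_or_gt 0 q with hq0 | hq0
  · exact mul_le_mul (Real.rpow_le_rpow (by linarith) (by linarith) hq0) hts ht
      (Real.rpow_nonneg (by linarith) q)
  · rcases eq_or_lt_of_le ht with h0 | htpos
    · rw [← h0]
      simp only [mul_zero]
      exact mul_nonneg (Real.rpow_nonneg (by linarith) q) (by linarith)
    · have hbt : 0 < b + t := by linarith
      have hbs : 0 < b + s := by linarith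
      have hα0 : 0 < -q := by linarith
      have hα1 : -q < 1 := by linarith
      have key : t * (b+s)^(-q) ≤ s * (b+t)^(-q) := by
        have e1 : (b+s)^(-q) = ((b+s)/(b+t))^(-q) * (b+t)^(-q) := by
          rw [← Real.mul_rpow (by positivity) hbt.le, div_mul_cancel₀ _ (ne_of_gt hbt)]
        have hbase : (1:ℝ) ≤ (b+s)/(b+t) := (one_le_div hbt).mpr (by linarith)
        have h2 : ((b+s)/(b+t))^(-q) ≤ (b+s)/(b+t) := by
          calc ((b+s)/(b+t))^(-q) ≤ ((b+s)/(b+t))^(1:ℝ) :=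
                Real.rpow_le_rpow_of_exponent_le hbase (by linarith)
            _ = (b+s)/(b+t) := Real.rpow_one _
        have h3 : (b+s)/(b+t) ≤ s/t := by
          rw [div_le_div_iff₀ hbt htpos]; nlinarith
        have h4 : ((b+s)/(b+t))^(-q) ≤ s/t := h2.trans h3
        have h5 : (b+s)^(-q) ≤ s/t * (b+t)^(-q) := by
          rw [e1]
          exact mul_le_mul_of_nonneg_right h4 (Real.rpow_nonneg hbt.le _)
        calc t * (b+s)^(-q) ≤ t * (s/t * (b+t)^(-q)) :=
              mul_le_mul_of_nonneg_left h5 ht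
          _ = s * (b+t)^(-q) := by field_simp
      have hPpos : 0 < (b+t)^(-q) := Real.rpow_pos_of_pos hbt _
      have hQpos : 0 < (b+s)^(-q) := Real.rpow_pos_of_pos hbs _
      have eT : (b+t)^q = ((b+t)^(-q))⁻¹ := by
        have h := Real.rpow_neg hbt.le (-q); rwa [neg_neg] at h
      have eS : (b+s)^q = ((b+s)^(-q))⁻¹ := by
        have h := Real.rpow_neg hbs.le (-q); rwa [neg_neg] at h
      rw [eT, eS]
      rw [mul_comm _ t, mul_comm _ s, ← div_eq_mul_inv, ← div_eq_mul_inv,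
        div_le_div_iff₀ hPpos hQpos]
      linarith [key]

lemma g_diff_upper {q b s t E : ℝ} (hb : 0 ≤ b) (ht : 0 ≤ t) (hts : t ≤ s) (hqE : |q| ≤ E) :
    (b+s)^q * s - (b+t)^q * t ≤ ((1+E) * 2^E) * ((b+s+t)^q * (s-t)) := by
  have hE : 0 ≤ E := (abs_nonneg q).trans hqE
  have hs : 0 ≤ s := ht.trans hts
  have h2E : (1:ℝ) ≤ 2^E := two_rpow_ge_one hE
  have hbst : 0 ≤ (b+s+t)^q := Real.rpow_nonneg (by linarith) q
  have hA : (b+s)^q ≤ 2^E * (b+s+t)^q :=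
    rpow_comp (by linarith) (by linarith) (by linarith) (by linarith) hqE
  have h1 : (b+s)^q * (s-t) ≤ 2^E * ((b+s+t)^q * (s-t)) := by
    rw [← mul_assoc]
    exact mul_le_mul_of_nonneg_right hA (by linarith)
  have h2 : t * ((b+s)^q - (b+t)^q) ≤ E * 2^E * ((b+s+t)^q * (s-t)) := by
    have hRHS : 0 ≤ E * 2^E * ((b+s+t)^q * (s-t)) := by
      apply mul_nonneg (by positivity)
      exact mul_nonneg hbst (by linarith)
    rcases eq_or_lt_of_le ht with h0 | htpos
    · rw [← h0]
      simp only [zero_mul]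
      exact mul_nonneg (by positivity) (mul_nonneg (Real.rpow_nonneg (by linarith) _) (by linarith))
    rcases le_or_gt q 0 with hq | hq
    · have hbt : 0 < b + t := by linarith
      have : (b+s)^q ≤ (b+t)^q :=
        Real.rpow_le_rpow_of_nonpos hbt (by linarith) hq
      nlinarith
    · rcases eq_or_lt_of_le hts with h0 | hlt
      · rw [h0]; simp
      have hbt : 0 < b + t := by linarith
      have hbs : 0 < b + s := by linarith
      obtain ⟨ξ, hξ1, hξ2, hξeq⟩ := rpow_mvt hbt (by linarith : b+t < b+s) q
      have hdiff : (b+s)^q - (b+t)^q = q * ξ^(q-1) * (s-t) := by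
        rw [hξeq]; ring_nf
      have hξpos : 0 < ξ := hbt.trans hξ1
      have hbstpos : 0 < b+s+t := by linarith
      have hkey : t * ξ^(q-1) ≤ (b+s+t)^q := by
        rcases le_or_gt 1 q with hq1 | hq1
        · have hm : ξ^(q-1) ≤ (b+s+t)^(q-1) :=
            Real.rpow_le_rpow hξpos.le (by linarith) (by linarith)
          calc t * ξ^(q-1) ≤ (b+s+t) * (b+s+t)^(q-1) := by
                apply mul_le_mul (by linarith) hm (Real.rpow_nonneg hξpos.le _) (by linarith)
            _ = (b+s+t)^q := by
                rw [show q = (q-1) + 1 by ring, Real.rpow_add_one (ne_of_gt hbstpos)]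
                ring
        · have hm : ξ^(q-1) ≤ (b+t)^(q-1) :=
            Real.rpow_le_rpow_of_nonpos hbt hξ1.le (by linarith)
          calc t * ξ^(q-1) ≤ (b+t) * (b+t)^(q-1) := by
                apply mul_le_mul (by linarith) hm (Real.rpow_nonneg hξpos.le _) (by linarith)
            _ = (b+t)^q := by
                rw [show q = (q-1) + 1 by ring, Real.rpow_add_one (ne_of_gt hbt)]
                ring
            _ ≤ (b+s+t)^q := Real.rpow_le_rpow hbt.le (by linarith) hq.le
      have hqE' : q ≤ E := (le_abs_self q).trans hqE
      have hξnn : 0 ≤ ξ^(q-1) := Real.rpow_nonneg hξpos.le _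
      calc t * ((b+s)^q - (b+t)^q) = q * (t * ξ^(q-1)) * (s-t) := by rw [hdiff]; ring
        _ ≤ q * (b+s+t)^q * (s-t) := by
            apply mul_le_mul_of_nonneg_right _ (by linarith)
            exact mul_le_mul_of_nonneg_left hkey hq.le
        _ = q * ((b+s+t)^q * (s-t)) := by ring
        _ ≤ E * 2^E * ((b+s+t)^q * (s-t)) :=
            mul_le_mul_of_nonneg_right (by nlinarith) (mul_nonneg hbst (by linarith))
  have key : (b+s)^q * s - (b+t)^q * t
      = (b+s)^q * (s-t) + t * ((b+s)^q - (b+t)^q) := by ring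
  rw [key]
  nlinarith [mul_nonneg hbst (show (0:ℝ) ≤ s - t by linarith)]

lemma g_diff_lower {q b s t E ε : ℝ} (hb : 0 ≤ b) (ht : 0 ≤ t) (hts : t ≤ s) (hqE : |q| ≤ E)
    (hε : 0 < ε) (hε1 : ε ≤ 1) (hεq : ε ≤ 1 + q) :
    ε * ((b+s+t)^q * (s-t)) ≤ 2^E * ((b+s)^q * s - (b+t)^q * t) := by
  have hE : 0 ≤ E := (abs_nonneg q).trans hqE
  have hs : 0 ≤ s := ht.trans hts
  have h2E : (1:ℝ) ≤ 2^E := two_rpow_ge_one hE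
  have hbst : 0 ≤ (b+s+t)^q := Real.rpow_nonneg (by linarith) q
  rcases le_or_gt 0 q with hq0 | hq0
  · -- q ≥ 0 : use (b+t)^q ≤ (b+s)^q and (b+s+t)^q ≤ 2^E (b+s)^q
    have h1 : (b+t)^q ≤ (b+s)^q := Real.rpow_le_rpow (by linarith) (by linarith) hq0
    have h2 : (b+s+t)^q ≤ 2^E * (b+s)^q :=
      rpow_comp (x := b+s) (by linarith) (by linarith) (by linarith) (by linarith) hqE
    have h3 : (b+s)^q * (s-t) ≤ (b+s)^q * s - (b+t)^q * t := by nlinarith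
    have h4 : ε * ((b+s+t)^q * (s-t)) ≤ (b+s+t)^q * (s-t) := by
      nlinarith [mul_nonneg hbst (show (0:ℝ) ≤ s - t by linarith)]
    have h5 : (b+s+t)^q * (s-t) ≤ 2^E * ((b+s)^q * (s-t)) := by
      rw [← mul_assoc]
      exact mul_le_mul_of_nonneg_right h2 (by linarith)
    have h6 : 2^E * ((b+s)^q * (s-t)) ≤ 2^E * ((b+s)^q * s - (b+t)^q * t) := by
      apply mul_le_mul_of_nonneg_left h3 (by positivity)
    linarith
  · -- q < 0
    have hbsq : 0 ≤ (b+s)^q := Real.rpow_nonneg (by linarith) q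
    have claim : t * ((b+t)^q - (b+s)^q) ≤ (-q) * ((b+s)^q * (s-t)) := by
      rcases eq_or_lt_of_le ht with h0 | htpos
      · rw [← h0]
        simp only [zero_mul]
        exact mul_nonneg (by linarith) (mul_nonneg hbsq (by linarith))
      rcases eq_or_lt_of_le hts with h0 | hlt
      · rw [h0]; simp
      have hbt : 0 < b+t := by linarith
      have hbs : 0 < b+s := by linarith
      have hPQ : (b+t)^(-q) ≤ (b+s)^(-q) :=
        Real.rpow_le_rpow hbt.le (by linarith) (by linarith)
      have hPpos : 0 < (b+t)^(-q) := Real.rpow_pos_of_pos hbt _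
      have hQpos : 0 < (b+s)^(-q) := Real.rpow_pos_of_pos hbs _
      obtain ⟨ξ, hξ1, hξ2, hξeq⟩ := rpow_mvt hbt (show b+t < b+s by linarith) (-q)
      have hξpos : 0 < ξ := hbt.trans hξ1
      have hm : (b+t) * ξ^(-q-1) ≤ (b+t)^(-q) := by
        have h1 : ξ^(-q-1) ≤ (b+t)^(-q-1) :=
          Real.rpow_le_rpow_of_nonpos hbt hξ1.le (by linarith)
        have h2 : (b+t)^(-q-1) = (b+t)^(-q) / (b+t) := by
          rw [show -q-1 = -q + (-1) by ring, Real.rpow_add hbt, Real.rpow_neg_one,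
            div_eq_mul_inv]
        calc (b+t) * ξ^(-q-1) ≤ (b+t)*(b+t)^(-q-1) := mul_le_mul_of_nonneg_left h1 hbt.le
          _ = (b+t)^(-q) := by rw [h2]; field_simp
      have hQP : (b+t) * ((b+s)^(-q) - (b+t)^(-q)) ≤ (-q) * (b+t)^(-q) * (s-t) := by
        have e : (b+s)^(-q) - (b+t)^(-q) = (-q) * ξ^(-q-1) * (s-t) := by
          rw [hξeq]; ring
        rw [e]
        calc (b+t) * ((-q)*ξ^(-q-1)*(s-t)) = (-q) * ((b+t)*ξ^(-q-1)) * (s-t) := by ring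
          _ ≤ (-q) * (b+t)^(-q) * (s-t) := by
              apply mul_le_mul_of_nonneg_right
                (mul_le_mul_of_nonneg_left hm (by linarith)) (by linarith)
      have eT : (b+t)^q = ((b+t)^(-q))⁻¹ := by
        have h := Real.rpow_neg hbt.le (-q); rwa [neg_neg] at h
      have eS : (b+s)^q = ((b+s)^(-q))⁻¹ := by
        have h := Real.rpow_neg hbs.le (-q); rwa [neg_neg] at h
      rw [eT, eS]
      set P := (b+t)^(-q) with hPdef
      set Q := (b+s)^(-q) with hQdef
      have hinv : P⁻¹ - Q⁻¹ = (Q-P) * (P⁻¹ * Q⁻¹) := by field_simp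
      have hinvnn : 0 ≤ P⁻¹ - Q⁻¹ := by
        rw [hinv]; exact mul_nonneg (by linarith) (by positivity)
      calc t * (P⁻¹-Q⁻¹) ≤ (b+t)*(P⁻¹-Q⁻¹) := mul_le_mul_of_nonneg_right (by linarith) hinvnn
        _ = ((b+t)*(Q-P)) * (P⁻¹*Q⁻¹) := by rw [hinv]; ring
        _ ≤ ((-q)*P*(s-t)) * (P⁻¹*Q⁻¹) :=
            mul_le_mul_of_nonneg_right hQP (by positivity)
        _ = (-q) * (Q⁻¹*(s-t)) * (P*P⁻¹) := by ring
        _ = -q * (Q⁻¹ * (s-t)) := by rw [mul_inv_cancel₀ (ne_of_gt hPpos), mul_one]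
    -- assemble
    have expand : (b+s)^q * s - (b+t)^q * t
        = (b+s)^q * (s-t) - t * ((b+t)^q - (b+s)^q) := by ring
    have h7 : (1+q) * ((b+s)^q * (s-t)) ≤ (b+s)^q * s - (b+t)^q * t := by
      rw [expand]; nlinarith [claim]
    have h8 : (b+s+t)^q ≤ (b+s)^q := by
      rcases eq_or_lt_of_le hs with h0 | hspos
      · rw [← h0] at hts ⊢
        have ht0 : t = 0 := le_antisymm hts ht
        rw [ht0]; norm_num
      · exact Real.rpow_le_rpow_of_nonpos (by linarith) (by linarith) hq0.le
    have h9 : ε * ((b+s+t)^q * (s-t)) ≤ (1+q) * ((b+s)^q * (s-t)) := by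
      have e1 : ε * ((b+s+t)^q * (s-t)) ≤ ε * ((b+s)^q * (s-t)) := by
        apply mul_le_mul_of_nonneg_left _ hε.le
        exact mul_le_mul_of_nonneg_right h8 (by linarith)
      have e2 : ε * ((b+s)^q * (s-t)) ≤ (1+q) * ((b+s)^q * (s-t)) := by
        apply mul_le_mul_of_nonneg_right hεq
        exact mul_nonneg hbsq (by linarith)
      linarith
    have h10 : (b+s)^q * s - (b+t)^q * t ≤ 2^E * ((b+s)^q * s - (b+t)^q * t) := by
      have hnn : 0 ≤ (b+s)^q * s - (b+t)^q * t := by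
        have := g_mono hb ht hts (show (-1:ℝ) < q by linarith)
        linarith
      nlinarith
    linarith

lemma g_sum_upper {q b s t E : ℝ} (hb : 0 ≤ b) (ht : 0 ≤ t) (hts : t ≤ s) (hqE : |q| ≤ E)
    (hq : -1 < q) :
    (b+s)^q * s + (b+t)^q * t ≤ (2 * 2^E) * ((b+s+t)^q * (s+t)) := by
  have hE : 0 ≤ E := (abs_nonneg q).trans hqE
  have hs : 0 ≤ s := ht.trans hts
  have hgm := g_mono hb ht hts hq
  have hA : (b+s)^q ≤ 2^E * (b+s+t)^q :=
    rpow_comp (by linarith) (by linarith) (by linarith) (by linarith) hqE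
  have hbst : 0 ≤ (b+s+t)^q := Real.rpow_nonneg (by linarith) q
  have h1 : (b+s)^q * s ≤ 2^E * ((b+s+t)^q * s) := by
    rw [← mul_assoc]; exact mul_le_mul_of_nonneg_right hA hs
  have h2 : 2^E * ((b+s+t)^q * s) ≤ 2^E * ((b+s+t)^q * (s+t)) := by
    apply mul_le_mul_of_nonneg_left _ (by positivity)
    exact mul_le_mul_of_nonneg_left (by linarith) hbst
  nlinarith

lemma g_sum_lower {q b s t E : ℝ} (hb : 0 ≤ b) (ht : 0 ≤ t) (hts : t ≤ s) (hqE : |q| ≤ E)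
    (hq : -1 < q) :
    (b+s+t)^q * (s+t) ≤ (2 * 2^E) * ((b+s)^q * s + (b+t)^q * t) := by
  have hE : 0 ≤ E := (abs_nonneg q).trans hqE
  have hs : 0 ≤ s := ht.trans hts
  have hB : (b+s+t)^q ≤ 2^E * (b+s)^q :=
    rpow_comp (x := b+s) (by linarith) (by linarith) (by linarith) (by linarith) hqE
  have hg : 0 ≤ (b+t)^q * t := mul_nonneg (Real.rpow_nonneg (by linarith) q) ht
  have h1 : (b+s+t)^q * (s+t) ≤ (b+s+t)^q * (2*s) := by
    apply mul_le_mul_of_nonneg_left (by linarith) (Real.rpow_nonneg (by linarith) q)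
  have h2 : (b+s+t)^q * (2*s) ≤ (2^E * (b+s)^q) * (2*s) := by
    apply mul_le_mul_of_nonneg_right hB (by linarith)
  have h2Epos : (0:ℝ) < 2^E := by positivity
  have hbsq : 0 ≤ (b+s)^q := Real.rpow_nonneg (by linarith) q
  nlinarith

lemma affine_nonneg {m k v u : ℝ} (h1 : -v ≤ u) (h2 : u ≤ v)
    (hA : 0 ≤ m*v + k) (hB : 0 ≤ m*(-v) + k) : 0 ≤ m*u + k := by
  rcases le_total 0 m with hm | hm
  · nlinarith
  · nlinarith

lemma core_aux {q b s t u E ε : ℝ} (hb : 0 ≤ b) (ht : 0 ≤ t) (hts : t ≤ s)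
    (hu1 : -(s*t) ≤ u) (hu2 : u ≤ s*t) (hqE : |q| ≤ E)
    (hε : 0 < ε) (hε1 : ε ≤ 1) (hεq : ε ≤ 1 + q) :
    ε^2 * (((b+s+t)^q)^2 * (s^2+t^2-2*u)) ≤
      (2*2^E)^2 * (((b+s)^q)^2*s^2 + ((b+t)^q)^2*t^2 - 2*((b+s)^q*(b+t)^q)*u)
    ∧ ((b+s)^q)^2*s^2 + ((b+t)^q)^2*t^2 - 2*((b+s)^q*(b+t)^q)*u ≤
      ((2+2*E)*2^E)^2 * (((b+s+t)^q)^2 * (s^2+t^2-2*u)) := by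
  have hE : 0 ≤ E := (abs_nonneg q).trans hqE
  have hs : 0 ≤ s := ht.trans hts
  have hT1 : (1:ℝ) ≤ 2^E := two_rpow_ge_one hE
  have hq1 : (-1:ℝ) < q := by linarith
  have hXnn : 0 ≤ (b+s+t)^q * (s-t) :=
    mul_nonneg (Real.rpow_nonneg (by linarith) q) (by linarith)
  have hX'nn : 0 ≤ (b+s+t)^q * (s+t) :=
    mul_nonneg (Real.rpow_nonneg (by linarith) q) (by linarith)
  have hDnn : 0 ≤ (b+s)^q * s - (b+t)^q * t := by linarith [g_mono hb ht hts hq1]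
  have hSnn : 0 ≤ (b+s)^q * s + (b+t)^q * t := by
    have h1 : 0 ≤ (b+s)^q * s := mul_nonneg (Real.rpow_nonneg (by linarith) q) hs
    have h2 : 0 ≤ (b+t)^q * t := mul_nonneg (Real.rpow_nonneg (by linarith) q) ht
    linarith
  have hd_up := g_diff_upper hb ht hts hqE
  have hd_lo := g_diff_lower hb ht hts hqE hε hε1 hεq
  have hs_up := g_sum_upper hb ht hts hqE hq1
  have hs_lo := g_sum_lower hb ht hts hqE hq1
  have hεXnn : 0 ≤ ε * ((b+s+t)^q * (s-t)) := mul_nonneg hε.le hXnn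
  have hεX'nn : 0 ≤ ε * ((b+s+t)^q * (s+t)) := mul_nonneg hε.le hX'nn
  have hTnn : (0:ℝ) ≤ 2^E := by linarith
  -- squared endpoint bounds
  have e1 : ((b+s)^q * s - (b+t)^q * t)^2 ≤
      ((2+2*E)*2^E)^2 * ((b+s+t)^q * (s-t))^2 := by
    calc ((b+s)^q * s - (b+t)^q * t)^2 ≤ (((1+E)*2^E) * ((b+s+t)^q * (s-t)))^2 :=
          pow_le_pow_left₀ hDnn hd_up 2
      _ = ((1+E)*2^E)^2 * ((b+s+t)^q * (s-t))^2 := mul_pow _ _ 2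
      _ ≤ ((2+2*E)*2^E)^2 * ((b+s+t)^q * (s-t))^2 := by
          apply mul_le_mul_of_nonneg_right _ (sq_nonneg _)
          apply pow_le_pow_left₀ (by positivity) _ 2
          nlinarith
  have e2 : ε^2 * ((b+s+t)^q * (s-t))^2 ≤
      (2*2^E)^2 * ((b+s)^q * s - (b+t)^q * t)^2 := by
    have h := pow_le_pow_left₀ hεXnn hd_lo 2
    rw [mul_pow, mul_pow] at h
    nlinarith [sq_nonneg ((b+s)^q * s - (b+t)^q * t), sq_nonneg ((2:ℝ)^E)]
  have e3 : ((b+s)^q * s + (b+t)^q * t)^2 ≤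
      ((2+2*E)*2^E)^2 * ((b+s+t)^q * (s+t))^2 := by
    calc ((b+s)^q * s + (b+t)^q * t)^2 ≤ ((2*2^E) * ((b+s+t)^q * (s+t)))^2 :=
          pow_le_pow_left₀ hSnn hs_up 2
      _ = (2*2^E)^2 * ((b+s+t)^q * (s+t))^2 := mul_pow _ _ 2
      _ ≤ ((2+2*E)*2^E)^2 * ((b+s+t)^q * (s+t))^2 := by
          apply mul_le_mul_of_nonneg_right _ (sq_nonneg _)
          apply pow_le_pow_left₀ (by positivity) _ 2
          nlinarith
  have e4 : ε^2 * ((b+s+t)^q * (s+t))^2 ≤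
      (2*2^E)^2 * ((b+s)^q * s + (b+t)^q * t)^2 := by
    have h0 : ε * ((b+s+t)^q * (s+t)) ≤ (2*2^E) * ((b+s)^q * s + (b+t)^q * t) := by
      have h1 : ε * ((b+s+t)^q * (s+t)) ≤ 1 * ((b+s+t)^q * (s+t)) :=
        mul_le_mul_of_nonneg_right hε1 hX'nn
      linarith
    have h := pow_le_pow_left₀ hεX'nn h0 2
    rw [mul_pow, mul_pow] at h
    linarith
  constructor
  · -- lower bound via affine interpolation
    have h := affine_nonneg
      (m := ε^2*(2*((b+s+t)^q)^2) - (2*2^E)^2 * (2*((b+s)^q*(b+t)^q)))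
      (k := (2*2^E)^2*(((b+s)^q)^2*s^2+((b+t)^q)^2*t^2) - ε^2*((b+s+t)^q)^2*(s^2+t^2))
      (v := s*t) (u := u) hu1 hu2 (by nlinarith [e2]) (by nlinarith [e4])
    nlinarith [h]
  · have h := affine_nonneg
      (m := 2*((b+s)^q*(b+t)^q) - ((2+2*E)*2^E)^2*(2*((b+s+t)^q)^2))
      (k := ((2+2*E)*2^E)^2*((b+s+t)^q)^2*(s^2+t^2) - (((b+s)^q)^2*s^2+((b+t)^q)^2*t^2))
      (v := s*t) (u := u) hu1 hu2 (by nlinarith [e1]) (by nlinarith [e3])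
    nlinarith [h]

lemma core {q b s t u E ε : ℝ} (hb : 0 ≤ b) (hs : 0 ≤ s) (ht : 0 ≤ t)
    (hu1 : -(s*t) ≤ u) (hu2 : u ≤ s*t) (hqE : |q| ≤ E)
    (hε : 0 < ε) (hε1 : ε ≤ 1) (hεq : ε ≤ 1 + q) :
    ε^2 * (((b+s+t)^q)^2 * (s^2+t^2-2*u)) ≤
      (2*2^E)^2 * (((b+s)^q)^2*s^2 + ((b+t)^q)^2*t^2 - 2*((b+s)^q*(b+t)^q)*u)
    ∧ ((b+s)^q)^2*s^2 + ((b+t)^q)^2*t^2 - 2*((b+s)^q*(b+t)^q)*u ≤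
      ((2+2*E)*2^E)^2 * (((b+s+t)^q)^2 * (s^2+t^2-2*u)) := by
  rcases le_total t s with h | h
  · exact core_aux hb ht h hu1 hu2 hqE hε hε1 hεq
  · have H := core_aux (q := q) (b := b) (s := t) (t := s) (u := u) hb hs h
      (by rw [mul_comm] at hu1; exact hu1) (by rw [mul_comm] at hu2; exact hu2)
      hqE hε hε1 hεq
    rw [show b + t + s = b + s + t by ring] at H
    obtain ⟨H1, H2⟩ := H
    constructor
    · nlinarith [H1]
    · nlinarith [H2]

section Phi
variable {p b r E : ℝ}

lemma phi_integrable (hb : 0 ≤ b) (hr : 0 ≤ r) (hp : 1 < p) :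
    IntervalIntegrable (fun x => (b+x)^(p-2)*x) volume 0 r := by
  apply MonotoneOn.intervalIntegrable
  rw [Set.uIcc_of_le hr]
  intro x hx y hy hxy
  exact g_mono hb hx.1 hxy (by linarith)

lemma phi_lower (hb : 0 ≤ b) (hr : 0 < r) (hp : 1 < p) (hpE : |p-2| ≤ E) :
    (b+r)^(p-2) * r^2 ≤ (8 * 2^E) * ∫ x in (0:ℝ)..r, (b+x)^(p-2)*x := by
  have hE : 0 ≤ E := (abs_nonneg _).trans hpE
  have hT1 : (1:ℝ) ≤ 2^E := two_rpow_ge_one hE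
  have hint := phi_integrable hb hr.le hp
  have hsub1 : Set.uIcc (0:ℝ) (r/2) ⊆ Set.uIcc (0:ℝ) r := by
    rw [Set.uIcc_of_le hr.le, Set.uIcc_of_le (by linarith : (0:ℝ) ≤ r/2)]
    exact Set.Icc_subset_Icc le_rfl (by linarith)
  have hsub2 : Set.uIcc (r/2) r ⊆ Set.uIcc (0:ℝ) r := by
    rw [Set.uIcc_of_le hr.le, Set.uIcc_of_le (by linarith : r/2 ≤ r)]
    exact Set.Icc_subset_Icc (by linarith) le_rfl
  have i1 := hint.mono_set hsub1
  have i2 := hint.mono_set hsub2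
  have hsplit := intervalIntegral.integral_add_adjacent_intervals i1 i2
  have h1 : 0 ≤ ∫ x in (0:ℝ)..(r/2), (b+x)^(p-2)*x :=
    intervalIntegral.integral_nonneg (by linarith) (fun u hu =>
      mul_nonneg (Real.rpow_nonneg (by linarith [hu.1]) _) hu.1)
  set C := (b+r/2)^(p-2) with hC
  have hCnn : 0 ≤ C := Real.rpow_nonneg (by linarith) _
  have hconst : ∫ _x in (r/2)..r, (C*(r/2)) = (r - r/2) * (C*(r/2)) := by
    rw [intervalIntegral.integral_const, smul_eq_mul]
  have hmono2 : ∀ x ∈ Set.Icc (r/2) r, C*(r/2) ≤ (b+x)^(p-2)*x := by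
    intro x hx
    exact g_mono hb (by linarith) hx.1 (by linarith)
  have hI2 : C*(r/2)*(r/2) ≤ ∫ x in (r/2)..r, (b+x)^(p-2)*x := by
    have := intervalIntegral.integral_mono_on (by linarith : r/2 ≤ r)
      (intervalIntegrable_const) i2 hmono2
    rw [hconst] at this
    calc C*(r/2)*(r/2) = (r - r/2)*(C*(r/2)) := by ring
      _ ≤ _ := this
  have hc : (b+r)^(p-2) ≤ 2^E * C :=
    rpow_comp (x := b+r/2) (by linarith) (by linarith) (by linarith) (by linarith) hpE
  have hI2nn : 0 ≤ ∫ x in (r/2)..r, (b+x)^(p-2)*x :=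
    le_trans (mul_nonneg (mul_nonneg hCnn (by linarith)) (by linarith)) hI2
  have hφI2 : (∫ x in (r/2)..r, (b+x)^(p-2)*x) ≤ ∫ x in (0:ℝ)..r, (b+x)^(p-2)*x := by
    linarith
  calc (b+r)^(p-2)*r^2 ≤ (2^E*C)*r^2 := mul_le_mul_of_nonneg_right hc (sq_nonneg r)
    _ = (4*2^E) * (C*(r/2)*(r/2)) := by ring
    _ ≤ (4*2^E) * ∫ x in (r/2)..r, (b+x)^(p-2)*x :=
        mul_le_mul_of_nonneg_left hI2 (by positivity)
    _ ≤ (8*2^E) * ∫ x in (0:ℝ)..r, (b+x)^(p-2)*x := by nlinarith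

lemma phi_upper (hb : 0 ≤ b) (hr : 0 ≤ r) (hp : 1 < p) (hpE : |p-2| ≤ E) :
    (∫ x in (0:ℝ)..r, (b+x)^(p-2)*x) ≤ (8 * 2^E) * ((b+r)^(p-2) * r^2) := by
  have hE : 0 ≤ E := (abs_nonneg _).trans hpE
  have hT1 : (1:ℝ) ≤ 2^E := two_rpow_ge_one hE
  have hint := phi_integrable hb hr hp
  have hbrnn : (0:ℝ) ≤ (b+r)^(p-2) := Real.rpow_nonneg (by linarith) _
  rcases le_or_gt 2 p with hp2 | hp2
  · -- p ≥ 2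
    have hpt : ∀ x ∈ Set.Icc (0:ℝ) r, (b+x)^(p-2)*x ≤ (b+r)^(p-2)*x := by
      intro x hx
      exact mul_le_mul_of_nonneg_right
        (Real.rpow_le_rpow (by linarith [hx.1]) (by linarith [hx.2]) (by linarith)) hx.1
    have hcomp := intervalIntegral.integral_mono_on hr hint
      ((continuous_const.mul continuous_id).intervalIntegrable 0 r) hpt
    simp only [Pi.mul_apply, id_eq] at hcomp
    have hval : ∫ x in (0:ℝ)..r, (b+r)^(p-2)*x = (b+r)^(p-2) * (r^2/2) := by
      rw [intervalIntegral.integral_const_mul, integral_id]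
      norm_num
    rw [hval] at hcomp
    nlinarith [mul_nonneg (sub_nonneg.mpr hT1) (mul_nonneg hbrnn (sq_nonneg r))]
  rcases le_or_gt r b with hrb | hrb
  · -- p < 2, r ≤ b
    have hpt : ∀ x ∈ Set.Icc (0:ℝ) r, (b+x)^(p-2)*x ≤ (2^E*(b+r)^(p-2))*x := by
      intro x hx
      apply mul_le_mul_of_nonneg_right _ hx.1
      exact rpow_comp (x := b+r) (by linarith) (by linarith [hx.1])
        (by linarith [hx.1]) (by linarith [hx.2]) hpE
    have hcomp := intervalIntegral.integral_mono_on hr hint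
      ((continuous_const.mul continuous_id).intervalIntegrable 0 r) hpt
    simp only [Pi.mul_apply, id_eq] at hcomp
    have hval : ∫ x in (0:ℝ)..r, (2^E*(b+r)^(p-2))*x = 2^E*(b+r)^(p-2) * (r^2/2) := by
      rw [intervalIntegral.integral_const_mul, integral_id]
      norm_num
    rw [hval] at hcomp
    nlinarith [mul_nonneg (sub_nonneg.mpr hT1) (mul_nonneg hbrnn (sq_nonneg r)),
      mul_nonneg hbrnn (sq_nonneg r)]
  · -- p < 2, b < r  (so r > 0)
    have hrpos : 0 < r := lt_of_le_of_lt hb hrb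
    have hbr : 0 < b + r := by linarith
    have hpt : ∀ x ∈ Set.Icc (0:ℝ) r, (b+x)^(p-2)*x ≤ (b+r)^(p-2)*(2*r) := by
      intro x hx
      rcases eq_or_lt_of_le hx.1 with h0 | hxpos
      · rw [← h0, mul_zero]
        positivity
      have hbx : 0 < b + x := by linarith
      have step1 : (b+x)^(p-2)*x ≤ (b+x)^(p-2)*(b+x) :=
        mul_le_mul_of_nonneg_left (by linarith) (Real.rpow_nonneg (by linarith) _)
      have step2 : (b+x)^(p-2)*(b+x) = (b+x)^(p-1) := by
        rw [show p-1 = (p-2)+1 by ring, Real.rpow_add_one (ne_of_gt hbx)]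
      have step3 : (b+x)^(p-1) ≤ (b+r)^(p-1) :=
        Real.rpow_le_rpow (by linarith) (by linarith [hx.2]) (by linarith)
      have step4 : (b+r)^(p-1) = (b+r)^(p-2)*(b+r) := by
        rw [show p-1 = (p-2)+1 by ring, Real.rpow_add_one (ne_of_gt hbr)]
      have step5 : (b+r)^(p-2)*(b+r) ≤ (b+r)^(p-2)*(2*r) :=
        mul_le_mul_of_nonneg_left (by linarith) hbrnn
      linarith [step2 ▸ step1, step4 ▸ step3]
    have hcomp := intervalIntegral.integral_mono_on hr hint
      (intervalIntegrable_const) hpt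
    have hval : ∫ _x in (0:ℝ)..r, ((b+r)^(p-2)*(2*r)) = r * ((b+r)^(p-2)*(2*r)) := by
      rw [intervalIntegral.integral_const, smul_eq_mul]
      norm_num
    rw [hval] at hcomp
    nlinarith [mul_nonneg (sub_nonneg.mpr hT1) (mul_nonneg hbrnn (sq_nonneg r)),
      mul_nonneg hbrnn (sq_nonneg r)]

end Phi

noncomputable def phiShift (δ p a r : ℝ) : ℝ :=
  ∫ s in (0:ℝ)..r, (δ + a + s) ^ (p - 2) * s

noncomputable def msym {d : ℕ} (A : Matrix (Fin d) (Fin d) ℝ) : Matrix (Fin d) (Fin d) ℝ :=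
  (2 : ℝ)⁻¹ • (A + A.transpose)

noncomputable def frob {d : ℕ} (A : Matrix (Fin d) (Fin d) ℝ) : ℝ :=
  Real.sqrt (∑ i, ∑ j, (A i j) ^ 2)

noncomputable def Fmap {d : ℕ} (δ p : ℝ) (A : Matrix (Fin d) (Fin d) ℝ) :
    Matrix (Fin d) (Fin d) ℝ :=
  ((δ + frob (msym A)) ^ ((p - 2) / 2)) • msym A

lemma frob_nonneg {d : ℕ} (A : Matrix (Fin d) (Fin d) ℝ) : 0 ≤ frob A :=
  Real.sqrt_nonneg _

lemma frob_sq {d : ℕ} (A : Matrix (Fin d) (Fin d) ℝ) :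
    frob A ^ 2 = ∑ i, ∑ j, (A i j) ^ 2 := by
  rw [frob, Real.sq_sqrt]
  positivity

lemma frob_eq_zero {d : ℕ} {A : Matrix (Fin d) (Fin d) ℝ} (h : frob A = 0) : A = 0 := by
  have h2 : frob A ^ 2 = 0 := by rw [h]; ring
  rw [frob_sq] at h2
  ext i j
  have hnn : ∀ i : Fin d, 0 ≤ ∑ j, (A i j)^2 := fun i => Finset.sum_nonneg fun j _ => sq_nonneg _
  have hrow : ∑ j, (A i j)^2 = 0 := by
    have := (Finset.sum_eq_zero_iff_of_nonneg (fun i _ => hnn i)).mp h2 i (Finset.mem_univ i)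
    exact this
  have := (Finset.sum_eq_zero_iff_of_nonneg (fun j _ => sq_nonneg (A i j))).mp hrow j
    (Finset.mem_univ j)
  have := pow_eq_zero_iff (n := 2) (by norm_num) |>.mp this
  simpa using this

lemma double_sum_prod {d : ℕ} (h : Fin d → Fin d → ℝ) :
    ∑ i, ∑ j, h i j = ∑ p : Fin d × Fin d, h p.1 p.2 := by
  rw [← Finset.univ_product_univ, Finset.sum_product]

/-- Cauchy–Schwarz for the Frobenius inner product. -/
lemma frob_cs {d : ℕ} (X Y : Matrix (Fin d) (Fin d) ℝ) :
    (∑ i, ∑ j, X i j * Y i j) ≤ frob X * frob Y := by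
  rw [double_sum_prod (fun i j => X i j * Y i j), frob, frob,
    double_sum_prod (fun i j => X i j ^ 2), double_sum_prod (fun i j => Y i j ^ 2)]
  exact Real.sum_mul_le_sqrt_mul_sqrt _ _ _

lemma frob_cs' {d : ℕ} (X Y : Matrix (Fin d) (Fin d) ℝ) :
    -(frob X * frob Y) ≤ (∑ i, ∑ j, X i j * Y i j) := by
  have h := frob_cs X (-Y)
  have e1 : (∑ i, ∑ j, X i j * (-Y) i j) = -(∑ i, ∑ j, X i j * Y i j) := by
    simp [Finset.sum_neg_distrib]
  have e2 : frob (-Y) = frob Y := by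
    unfold frob
    congr 1
    apply Finset.sum_congr rfl; intro i _
    apply Finset.sum_congr rfl; intro j _
    simp
  rw [e1, e2] at h
  linarith

lemma frob_expand {d : ℕ} (a c : ℝ) (X Y : Matrix (Fin d) (Fin d) ℝ) :
    frob (a • X - c • Y) ^ 2
      = a^2 * frob X ^ 2 + c^2 * frob Y ^ 2 - 2*(a*c)*(∑ i, ∑ j, X i j * Y i j) := by
  rw [frob_sq, frob_sq, frob_sq]
  have e : ∀ i j, ((a • X - c • Y) i j)^2
      = a^2 * (X i j)^2 + c^2 * (Y i j)^2 - 2*(a*c)*(X i j * Y i j) := by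
    intro i j
    simp [Matrix.sub_apply, Matrix.smul_apply, smul_eq_mul]
    ring
  calc ∑ i, ∑ j, ((a • X - c • Y) i j)^2
      = ∑ i, ∑ j, (a^2 * (X i j)^2 + c^2 * (Y i j)^2 - 2*(a*c)*(X i j * Y i j)) := by
        apply Finset.sum_congr rfl; intro i _
        apply Finset.sum_congr rfl; intro j _
        exact e i j
    _ = a^2 * (∑ i, ∑ j, (X i j)^2) + c^2 * (∑ i, ∑ j, (Y i j)^2)
        - 2*(a*c)*(∑ i, ∑ j, X i j * Y i j) := by
        simp only [Finset.mul_sum, ← Finset.sum_add_distrib, ← Finset.sum_sub_distrib]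

lemma frob_sub_sq {d : ℕ} (X Y : Matrix (Fin d) (Fin d) ℝ) :
    frob (X - Y) ^ 2
      = frob X ^ 2 + frob Y ^ 2 - 2*(∑ i, ∑ j, X i j * Y i j) := by
  have h := frob_expand 1 1 X Y
  simpa using h

lemma frob_sub_le {d : ℕ} (X Y : Matrix (Fin d) (Fin d) ℝ) :
    frob (X - Y) ≤ frob X + frob Y := by
  have h1 : frob (X - Y)^2 ≤ (frob X + frob Y)^2 := by
    rw [frob_sub_sq]
    nlinarith [frob_cs' X Y]
  have h2 := Real.sqrt_le_sqrt h1
  rwa [Real.sqrt_sq (frob_nonneg _), Real.sqrt_sq (by have := frob_nonneg X; have := frob_nonneg Y; linarith)] at h2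

theorem stmt5 (d : ℕ) (hd : 1 ≤ d) (δ pm pp : ℝ) (hδ : 0 ≤ δ) (hpm : 1 < pm)
    (hpmpp : pm ≤ pp) :
    ∃ c : ℝ, 1 ≤ c ∧ ∀ p : ℝ, pm ≤ p → p ≤ pp → ∀ A B : Matrix (Fin d) (Fin d) ℝ,
      c⁻¹ * phiShift δ p (frob (msym A)) (frob (msym A - msym B)) ≤
          frob (Fmap δ p A - Fmap δ p B) ^ 2 ∧
      frob (Fmap δ p A - Fmap δ p B) ^ 2 ≤
          c * phiShift δ p (frob (msym A)) (frob (msym A - msym B)) := by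
  have hpp1 : 1 < pp := lt_of_lt_of_le hpm hpmpp
  set E := pp + 1 with hEdef
  have hE2 : (2:ℝ) < E := by linarith
  have hEnn : (0:ℝ) ≤ E := by linarith
  have hT1 : (1:ℝ) ≤ 2^E := two_rpow_ge_one hEnn
  have hTpos : (0:ℝ) < 2^E := by linarith
  set ε := min pm 2 / 2 with hεdef
  have hε : 0 < ε := by
    have : (0:ℝ) < min pm 2 := lt_min (by linarith) (by norm_num)
    rw [hεdef]; linarith
  have hε1 : ε ≤ 1 := by
    have : min pm 2 ≤ 2 := min_le_right _ _
    rw [hεdef]; linarith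
  set c := (8*2^E*2^E) * (((2+2*E)*2^E)^2 + (2*2^E)^2/ε^2) with hcdef
  clear_value E ε c
  have hCC2 : (2:ℝ) ≤ (2+2*E)*2^E := by nlinarith
  have hc1 : 1 ≤ c := by
    have h1 : (0:ℝ) ≤ (2*2^E)^2/ε^2 := by positivity
    have h2 : (1:ℝ) ≤ 2^E*2^E := by nlinarith
    have h3 : (4:ℝ) ≤ ((2+2*E)*2^E)^2 := by nlinarith
    have h4 : (1:ℝ)*4 ≤ (2^E*2^E)*(((2+2*E)*2^E)^2 + (2*2^E)^2/ε^2) :=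
      mul_le_mul h2 (by linarith) (by norm_num) (by positivity)
    rw [hcdef]
    nlinarith [h4]
  have hcpos : 0 < c := by linarith
  refine ⟨c, hc1, ?_⟩
  intro p hp1 hp2 A B
  have hp : 1 < p := lt_of_lt_of_le hpm hp1
  have hpE : |p-2| ≤ E := abs_le.mpr ⟨by linarith, by linarith⟩
  set q := (p-2)/2 with hqdef
  have hqE : |q| ≤ E := by
    have h := abs_le.mp hpE
    rw [abs_le, hqdef]
    constructor <;> linarith [h.1, h.2]
  have hεq : ε ≤ 1 + q := by
    have h1 : min pm 2 ≤ pm := min_le_left _ _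
    rw [hεdef, hqdef]
    linarith
  set X := msym A with hXdef
  set Y := msym B with hYdef
  set s := frob X with hsdef
  set t := frob Y with htdef
  set r := frob (X - Y) with hrdef
  have hs : 0 ≤ s := frob_nonneg X
  have ht : 0 ≤ t := frob_nonneg Y
  have hrnn : 0 ≤ r := frob_nonneg (X - Y)
  rcases eq_or_lt_of_le hrnn with hr0 | hrpos
  · -- degenerate case r = 0
    have hXY : X - Y = 0 := frob_eq_zero hr0.symm
    have hXeqY : X = Y := sub_eq_zero.mp hXY
    have hst : s = t := by rw [hsdef, htdef, hXeqY]
    have hF : Fmap δ p A - Fmap δ p B = 0 := by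
      rw [show Fmap δ p A = ((δ + s)^q) • X from rfl,
        show Fmap δ p B = ((δ + t)^q) • Y from rfl, hXeqY, hst, sub_self]
    have hφ0 : phiShift δ p s r = 0 := by
      rw [← hr0]
      show (∫ x in (0:ℝ)..(0:ℝ), (δ + s + x) ^ (p - 2) * x) = 0
      exact intervalIntegral.integral_same
    have hfr0 : frob (Fmap δ p A - Fmap δ p B) = 0 := by
      rw [hF]
      show Real.sqrt (∑ i, ∑ j, ((0 : Matrix (Fin d) (Fin d) ℝ) i j) ^ 2) = 0
      simp
    rw [hφ0, hfr0]
    norm_num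
  · -- main case r > 0
    have hu1 := frob_cs' X Y
    have hu2 := frob_cs X Y
    set u := ∑ i, ∑ j, X i j * Y i j with hudef
    have hC := core (q := q) (b := δ) (s := s) (t := t) (u := u) (E := E) (ε := ε)
      hδ hs ht hu1 hu2 hqE hε hε1 hεq
    have hFdiff : Fmap δ p A - Fmap δ p B = ((δ+s)^q) • X - ((δ+t)^q) • Y := rfl
    have hΛ : frob (Fmap δ p A - Fmap δ p B)^2
        = ((δ+s)^q)^2*s^2 + ((δ+t)^q)^2*t^2 - 2*((δ+s)^q*(δ+t)^q)*u := by
      rw [hFdiff, frob_expand, ← hsdef, ← htdef, ← hudef]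
    have hR : s^2 + t^2 - 2*u = r^2 := by
      rw [hrdef, frob_sub_sq, ← hsdef, ← htdef, ← hudef]
    have hW : ((δ+s+t)^q)^2 = (δ+s+t)^(p-2) := by
      have h := Real.rpow_mul (show (0:ℝ) ≤ δ+s+t by linarith) q 2
      rw [Real.rpow_two] at h
      rw [show q*2 = p-2 by rw [hqdef]; ring] at h
      exact h.symm
    rw [hW, hR] at hC
    rw [← hΛ] at hC
    obtain ⟨hClo, hCup⟩ := hC
    -- triangle inequalities
    have htr1 : r ≤ s + t := by
      rw [hrdef, hsdef, htdef]; exact frob_sub_le X Y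
    have htr2 : t ≤ s + r := by
      have h := frob_sub_le X (X - Y)
      rw [sub_sub_cancel] at h
      rw [htdef, hsdef, hrdef]; exact h
    -- bridges between (δ+s+t) and (δ+s+r)
    have hbr1 : (δ+s+t)^(p-2) ≤ 2^E * ((δ+s+r)^(p-2)) :=
      rpow_comp (x := δ+s+r) (by linarith) (by linarith) (by linarith) (by linarith) hpE
    have hbr2 : (δ+s+r)^(p-2) ≤ 2^E * ((δ+s+t)^(p-2)) :=
      rpow_comp (x := δ+s+t) (by linarith) (by linarith) (by linarith) (by linarith) hpE
    -- phi bounds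
    have hφu := phi_upper (b := δ+s) (r := r) (E := E) (by linarith) hrnn hp hpE
    have hφl := phi_lower (b := δ+s) (r := r) (E := E) (by linarith) hrpos hp hpE
    have hφdef : phiShift δ p s r = ∫ x in (0:ℝ)..r, ((δ+s)+x)^(p-2)*x := rfl
    rw [hφdef]
    set φ := ∫ x in (0:ℝ)..r, ((δ+s)+x)^(p-2)*x with hφ
    set Λ := frob (Fmap δ p A - Fmap δ p B)^2 with hΛdef
    have hΛnn : 0 ≤ Λ := sq_nonneg _
    set W1 := (δ+s+r)^(p-2) with hW1
    set W2 := (δ+s+t)^(p-2) with hW2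
    have hW1nn : 0 ≤ W1 := Real.rpow_nonneg (by linarith) _
    have hW2nn : 0 ≤ W2 := Real.rpow_nonneg (by linarith) _
    -- hClo : ε^2*(W2*r^2) ≤ (2*2^E)^2*Λ ; hCup : Λ ≤ ((2+2E)*2^E)^2*(W2*r^2)
    clear_value X Y s t r u q φ Λ W1 W2
    clear hΛ hR hW hφdef hφ hΛdef hW1 hW2 hFdiff hqdef hudef hrdef hsdef htdef hXdef hYdef
    set T := (2:ℝ)^E with hTdef
    clear_value T
    set CC := (2+2*E)*T with hCCdef
    clear_value CC
    constructor
    · -- c⁻¹ φ ≤ Λ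
      rw [inv_mul_le_iff₀ hcpos]
      have k4 : W2*r^2 ≤ (2*T)^2/ε^2 * Λ := by
        rw [div_mul_eq_mul_div, le_div_iff₀ (by positivity)]
        nlinarith [hClo]
      have k5 : φ ≤ 8*T*(T*(W2*r^2)) := by
        have h := mul_le_mul_of_nonneg_right hbr2 (sq_nonneg r)
        nlinarith [hφu]
      have k6 : φ ≤ 8*T*T*((2*T)^2/ε^2 * Λ) := by
        nlinarith [k4, k5]
      have k7 : 8*T*T*((2*T)^2/ε^2 * Λ) ≤ c * Λ := by
        rw [hcdef]
        have hnn : (0:ℝ) ≤ 8*T*T*CC^2 := by positivity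
        nlinarith [mul_nonneg hnn hΛnn]
      linarith
    · -- Λ ≤ c φ
      have hφnn : 0 ≤ φ := by nlinarith [mul_nonneg hW1nn (sq_nonneg r)]
      have k1 : Λ ≤ CC^2 * (T*(W1*r^2)) := by
        have h := mul_le_mul_of_nonneg_right hbr1 (sq_nonneg r)
        nlinarith [hCup, sq_nonneg CC]
      have k2 : Λ ≤ CC^2 * (T*(8*T*φ)) := by
        have h := mul_le_mul_of_nonneg_left hφl (by positivity : (0:ℝ) ≤ CC^2 * T)
        nlinarith [k1]
      have k3 : CC^2 * (T*(8*T*φ)) ≤ c * φ := by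
        rw [hcdef]
        have hnn : (0:ℝ) ≤ 8*T*T*((2*T)^2/ε^2) := by positivity
        nlinarith [mul_nonneg hnn hφnn]
      linarith
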